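/- If λ is a stable* matching and firm-copy f_{ij} is matched to worker w, then w is in the choice set of firm φ_i from the set of all workers matched to copies of φ_i: w ∈ C_{φ_i}(⋃_{j'∈J_i}{λ(f_{ij'})}). -/

import Mathlib

open Classical

noncomputable section

/- Many-to-one market: firms `ι` with path-independent choice functions
`C i : Finset W → Finset W`, workers `W` with linear preferences `PwFirm w`
over `Option ι` (`none` = `∅`, larger = better).  Via the Aizerman–Malishevski
decomposition `C i S = ⋃_{j} max_S P_{ij}`, firm `i` is split into copies
indexed by `Fin (J i)`; firm-copy `⟨i, j⟩` has the linear preference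
`Pf ⟨i, j⟩` over `Option W`, and workers have linear preferences `Pw w` over
`Option (Σ i, Fin (J i))` refining `PwFirm w`. -/

section Defs

variable {ι W : Type*} [Fintype ι] [DecidableEq ι] [Fintype W] [DecidableEq W]
  {J : ι → ℕ}

/-- `lamF`, `lamW` form a one-to-one matching. -/
def OneIsMatching (lamF : (Σ i : ι, Fin (J i)) → Option W)
    (lamW : W → Option (Σ i : ι, Fin (J i))) : Prop :=
  ∀ (f : Σ i : ι, Fin (J i)) (w : W), lamF f = some w ↔ lamW w = some f

/-- Stability* of a one-to-one matching: no worker prefers `∅` to her match, no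
firm-copy prefers `∅` to its match, no matched firm-copy envies another copy of
the same firm, and there is no blocking* pair `(f, w)` (i.e. `w` prefers `f` to
her match and `f` prefers `w` to the match of every copy of the same firm). -/
def StableStar (Pf : (Σ i : ι, Fin (J i)) → LinearOrder (Option W))
    (Pw : W → LinearOrder (Option (Σ i : ι, Fin (J i))))
    (lamF : (Σ i : ι, Fin (J i)) → Option W)
    (lamW : W → Option (Σ i : ι, Fin (J i))) : Prop :=
  (∀ w : W, ¬ (Pw w).lt (lamW w) none) ∧
  (∀ f : Σ i : ι, Fin (J i),
    ¬ ((Pf f).lt (lamF f) none ∨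
      (lamF f ≠ none ∧ ∃ j' : Fin (J f.1), (Pf f).lt (lamF f) (lamF ⟨f.1, j'⟩)))) ∧
  (∀ (f : Σ i : ι, Fin (J i)) (w : W),
    ¬ ((Pw w).lt (lamW w) (some f) ∧
      ∀ j' : Fin (J f.1), (Pf f).lt (lamF ⟨f.1, j'⟩) (some w)))

/-- `muW`, `muF` form a many-to-one matching. -/
def ManyIsMatching (muW : W → Option ι) (muF : ι → Finset W) : Prop :=
  ∀ (i : ι) (w : W), w ∈ muF i ↔ muW w = some i

/-- Stability of a many-to-one matching: individual rationality for workers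
and firms, and no blocking worker–firm pair. -/
def ManyStable (C : ι → Finset W → Finset W)
    (PwFirm : W → LinearOrder (Option ι))
    (muW : W → Option ι) (muF : ι → Finset W) : Prop :=
  (∀ w : W, (PwFirm w).le none (muW w)) ∧
  (∀ i : ι, C i (muF i) = muF i) ∧
  (∀ (w : W) (i : ι),
    ¬ (w ∉ muF i ∧ w ∈ C i (insert w (muF i)) ∧ (PwFirm w).lt (muW w) (some i)))

/-- The choice functions `C` are decomposed à la Aizerman–Malishevski by the
linear orders `Pf ⟨i, j⟩`: `C i S = ⋃_{j ∈ J_i} max_S P_{ij}`. -/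
def AMDecomposition (C : ι → Finset W → Finset W)
    (Pf : (Σ i : ι, Fin (J i)) → LinearOrder (Option W)) : Prop :=
  ∀ (i : ι) (S : Finset W) (w : W),
    w ∈ C i S ↔ w ∈ S ∧ ∃ j : Fin (J i), ∀ x ∈ S, (Pf ⟨i, j⟩).le (some x) (some w)

/-- `T(λ)`, firm side: `μ(φ_i) = ⋃_{j ∈ J_i} {λ(f_{ij})}`. -/
def Tfirm (lamF : (Σ i : ι, Fin (J i)) → Option W) (i : ι) : Finset W :=
  Finset.univ.filter fun w : W => ∃ j : Fin (J i), lamF ⟨i, j⟩ = some w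

/-- `T(λ)`, worker side: `μ(w)` is the firm owning the copy `λ(w)`. -/
def Tworker (lamW : W → Option (Σ i : ι, Fin (J i))) (w : W) : Option ι :=
  (lamW w).map Sigma.fst

/-- `T⁻¹(μ)`, worker side: a worker `w ∈ μ(φ_i)` is matched to the copy
`f_{ij}` of `φ_i` with the smallest index `j` such that
`w = max_{μ(φ_i)} P_{ij}`. -/
def TinvW (Pf : (Σ i : ι, Fin (J i)) → LinearOrder (Option W))
    (muW : W → Option ι) (muF : ι → Finset W) (w : W) :
    Option (Σ i : ι, Fin (J i)) :=
  match muW w with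
  | none => none
  | some i =>
      if h : (Finset.univ.filter (fun j : Fin (J i) =>
          ∀ x ∈ muF i, (Pf ⟨i, j⟩).le (some x) (some w))).Nonempty then
        some ⟨i, (Finset.univ.filter (fun j : Fin (J i) =>
          ∀ x ∈ muF i, (Pf ⟨i, j⟩).le (some x) (some w))).min' h⟩
      else none

/-- `T⁻¹(μ)`, firm-copy side. -/
def TinvF (Pf : (Σ i : ι, Fin (J i)) → LinearOrder (Option W))
    (muW : W → Option ι) (muF : ι → Finset W) (f : Σ i : ι, Fin (J i)) :
    Option W :=
  if h : ∃ w : W, TinvW Pf muW muF w = some f then some h.choose else none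

end Defs

/-- if `λ` is a stable* matching and firm-copy `f_{ij}` is
matched to worker `w`, then `w` is chosen by firm `φ_i` from the set of all
workers matched to copies of `φ_i`:
`w ∈ C_{φ_i}(⋃_{j' ∈ J_i} {λ(f_{ij'})})`. -/
theorem matched_worker_chosen
    {ι W : Type*} [Fintype ι] [DecidableEq ι] [Fintype W] [DecidableEq W]
    {J : ι → ℕ}
    (C : ι → Finset W → Finset W)
    (Pf : (Σ i : ι, Fin (J i)) → LinearOrder (Option W))
    (Pw : W → LinearOrder (Option (Σ i : ι, Fin (J i))))
    (hAM : AMDecomposition C Pf)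
    (lamF : (Σ i : ι, Fin (J i)) → Option W)
    (lamW : W → Option (Σ i : ι, Fin (J i)))
    (hmatch : OneIsMatching lamF lamW)
    (hstable : StableStar Pf Pw lamF lamW) :
    ∀ (i : ι) (j : Fin (J i)) (w : W),
      lamF ⟨i, j⟩ = some w → w ∈ C i (Tfirm lamF i) := by
  intro i j w hw
  rw [hAM]
  refine ⟨by simp [Tfirm]; exact ⟨j, hw⟩, j, ?_⟩
  intro x hx
  simp only [Tfirm, Finset.mem_filter, Finset.mem_univ, true_and] at hx
  obtain ⟨j', hj'⟩ := hx
  have h2 := hstable.2.1 ⟨i, j⟩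
  push_neg at h2
  have hle := h2.2 (by rw [hw]; simp) j'
  rw [hw, hj'] at hle
  letI := Pf ⟨i, j⟩
  exact hle

end
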